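/- Consider an iterated algorithm on n+1 qubits: starting from |0⟩⟨0| ⊗ σ where σ is the maximally mixed state on n qubits, each of k steps applies an arbitrary unitary to all qubits, discards (traces out) the ancilla qubit, and appends a fresh |0⟩⟨0| ancilla. If after the final step and discard the state on the n system qubits is pure, then k ≥ n. -/

import Mathlib

open Matrix BigOperators Kronecker
open scoped Classical ComplexOrder

noncomputable section

def ptraceFst {C D : Type*} [Fintype C] (σ : Matrix (C × D) (C × D) ℂ) :
    Matrix D D ℂ := Matrix.of fun y y' => ∑ j : C, σ (j, y) (j, y')

def ptraceSnd {C D : Type*} [Fintype D] (σ : Matrix (C × D) (C × D) ℂ) :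
    Matrix C C ℂ := Matrix.of fun x x' => ∑ j : D, σ (x, j) (x', j)

def traceNorm {n : Type*} [Fintype n] [DecidableEq n] (M : Matrix n n ℂ) : ℝ :=
  ((Matrix.posSemidef_conjTranspose_mul_self M).1.eigenvectorUnitary.1 *
    diagonal ((fun x : ℝ => (x : ℂ)) ∘ (√·) ∘ (Matrix.posSemidef_conjTranspose_mul_self M).1.eigenvalues) *
    (star (Matrix.posSemidef_conjTranspose_mul_self M).1.eigenvectorUnitary : Matrix n n ℂ)).trace.re

def traceDist {n : Type*} [Fintype n] [DecidableEq n] (σ σ' : Matrix n n ℂ) : ℝ :=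
  traceNorm (σ - σ') / 2

def IsDensity {n : Type*} [Fintype n] (M : Matrix n n ℂ) : Prop :=
  M.PosSemidef ∧ M.trace = 1

def IsPure {n : Type*} [Fintype n] (σ : Matrix n n ℂ) : Prop :=
  ∃ ψ : n → ℂ, (∑ i, Complex.normSq (ψ i)) = 1 ∧ σ = Matrix.vecMulVec ψ (star ψ)

def inputState (a b : ℕ) :
    Matrix (Fin (2^a) × Fin (2^b)) (Fin (2^a) × Fin (2^b)) ℂ :=
  (Matrix.single 0 0 1) ⊗ₖ (((2:ℂ)^b)⁻¹ • (1 : Matrix (Fin (2^b)) (Fin (2^b)) ℂ))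

def measSub {C D : Type*} [Fintype C] [Fintype D] (σ : Matrix (C × D) (C × D) ℂ) (j : C) :
    Matrix D D ℂ := Matrix.of fun y y' => σ (j, y) (j, y')

def measProb {C D : Type*} [Fintype C] [Fintype D] (σ : Matrix (C × D) (C × D) ℂ) (j : C) : ℝ :=
  ((measSub σ j).trace).re

def gibbs {n : Type*} [Fintype n] [DecidableEq n] (β : ℝ) {H : Matrix n n ℂ}
    (hH : H.IsHermitian) : Matrix n n ℂ :=
  ((hH.cfc (fun x => Real.exp (-β * x))).trace)⁻¹ • hH.cfc (fun x => Real.exp (-β * x))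

def vNEntropy {n : Type*} [Fintype n] [DecidableEq n] (M : Matrix n n ℂ) : ℝ :=
  if h : M.IsHermitian then -∑ i, (h.eigenvalues i) * Real.logb 2 (h.eigenvalues i) else 0

def iterState (n : ℕ) (U : ℕ → Matrix (Fin 2 × Fin (2^n)) (Fin 2 × Fin (2^n)) ℂ) :
    ℕ → Matrix (Fin (2^n)) (Fin (2^n)) ℂ
  | 0 => ((2:ℂ)^n)⁻¹ • 1
  | k+1 => ptraceFst (U k * ((Matrix.single 0 0 1) ⊗ₖ iterState n U k) * (U k)ᴴ)



set_option linter.unusedSectionVars false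

variable {D : Type*} [Fintype D] [DecidableEq D]

open scoped MatrixOrder in
lemma Matrix.posSemidef_iff_eq_transpose_mul_self {m : Type*} [Fintype m] [DecidableEq m]
    {A : Matrix m m ℂ} : A.PosSemidef ↔ ∃ B : Matrix m m ℂ, A = Bᴴ * B := by
  constructor
  · intro hA
    obtain ⟨B, rfl⟩ := CStarAlgebra.nonneg_iff_eq_star_mul_self.mp hA.nonneg
    exact ⟨B, rfl⟩
  · rintro ⟨B, rfl⟩
    exact Matrix.posSemidef_conjTranspose_mul_self B

-- slice of a matrix B : columns restricted to row-index j
lemma conjTranspose_mul_slice (B : Matrix (Fin 2 × D) (Fin 2 × D) ℂ) (j : Fin 2) :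
    (B.submatrix id (fun y => (j, y)))ᴴ * (B.submatrix id (fun y => (j, y)))
      = measSub (Bᴴ * B) j := by
  ext y y'
  simp [Matrix.mul_apply, measSub, conjTranspose_apply]

lemma measSub_posSemidef {σ : Matrix (Fin 2 × D) (Fin 2 × D) ℂ} (hσ : σ.PosSemidef)
    (j : Fin 2) : (measSub σ j).PosSemidef := by
  obtain ⟨B, rfl⟩ := Matrix.posSemidef_iff_eq_transpose_mul_self.mp hσ
  rw [← conjTranspose_mul_slice]
  exact Matrix.posSemidef_conjTranspose_mul_self _

lemma ptraceFst_eq_add (σ : Matrix (Fin 2 × D) (Fin 2 × D) ℂ) :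
    ptraceFst σ = measSub σ 0 + measSub σ 1 := by
  ext y y'
  simp [ptraceFst, measSub, Fin.sum_univ_two]

lemma rank_le_rank_add_of_psd {M N : Matrix D D ℂ} (hM : M.PosSemidef) (hN : N.PosSemidef) :
    M.rank ≤ (M + N).rank := by
  have hker : LinearMap.ker (M + N).mulVecLin ≤ LinearMap.ker M.mulVecLin := by
    intro x hx
    rw [LinearMap.mem_ker, mulVecLin_apply] at hx ⊢
    have h0 : star x ⬝ᵥ (M + N) *ᵥ x = 0 := by rw [hx, dotProduct_zero]
    rw [add_mulVec, dotProduct_add] at h0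
    have h1 : 0 ≤ star x ⬝ᵥ M *ᵥ x := hM.dotProduct_mulVec_nonneg x
    have h2 : 0 ≤ star x ⬝ᵥ N *ᵥ x := hN.dotProduct_mulVec_nonneg x
    have hM0 : star x ⬝ᵥ M *ᵥ x = 0 := by
      rcases (add_eq_zero_iff_of_nonneg h1 h2).mp h0 with ⟨h, _⟩
      exact h
    exact (hM.dotProduct_mulVec_zero_iff x).mp hM0
  have e1 := LinearMap.finrank_range_add_finrank_ker M.mulVecLin
  have e2 := LinearMap.finrank_range_add_finrank_ker (M + N).mulVecLin
  have hk := Submodule.finrank_mono hker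
  rw [Matrix.rank, Matrix.rank]
  omega

lemma rank_le_two_mul_rank_ptraceFst {σ : Matrix (Fin 2 × D) (Fin 2 × D) ℂ}
    (hσ : σ.PosSemidef) : σ.rank ≤ 2 * (ptraceFst σ).rank := by
  obtain ⟨B, rfl⟩ := Matrix.posSemidef_iff_eq_transpose_mul_self.mp hσ
  set B0 := B.submatrix id (fun y : D => ((0 : Fin 2), y)) with hB0
  set B1 := B.submatrix id (fun y : D => ((1 : Fin 2), y)) with hB1
  have hrange : LinearMap.range B.mulVecLin ≤
      LinearMap.range B0.mulVecLin ⊔ LinearMap.range B1.mulVecLin := by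
    rintro _ ⟨x, rfl⟩
    have hx : B.mulVecLin x = B0.mulVecLin (fun y => x (0, y)) + B1.mulVecLin (fun y => x (1, y)) := by
      ext p
      simp only [mulVecLin_apply, Matrix.mulVec, dotProduct, Pi.add_apply,
        Matrix.submatrix_apply, id_eq, hB0, hB1]
      rw [Fintype.sum_prod_type, Fin.sum_univ_two]
    rw [hx]
    exact Submodule.add_mem_sup (LinearMap.mem_range_self _ _) (LinearMap.mem_range_self _ _)
  have hsum : B.rank ≤ B0.rank + B1.rank := by
    have h1 := Submodule.finrank_mono hrange
    have h2 := Submodule.finrank_sup_add_finrank_inf_eq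
      (LinearMap.range B0.mulVecLin) (LinearMap.range B1.mulVecLin)
    rw [Matrix.rank, Matrix.rank, Matrix.rank]
    omega
  have hr0 : B0.rank = (measSub (Bᴴ * B) 0).rank := by
    rw [← conjTranspose_mul_slice, Matrix.rank_conjTranspose_mul_self]
  have hr1 : B1.rank = (measSub (Bᴴ * B) 1).rank := by
    rw [← conjTranspose_mul_slice, Matrix.rank_conjTranspose_mul_self]
  have hp0 := measSub_posSemidef (Matrix.posSemidef_conjTranspose_mul_self B) (0 : Fin 2)
  have hp1 := measSub_posSemidef (Matrix.posSemidef_conjTranspose_mul_self B) (1 : Fin 2)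
  have hle0 : (measSub (Bᴴ * B) 0).rank ≤ (ptraceFst (Bᴴ * B)).rank := by
    rw [ptraceFst_eq_add]
    exact rank_le_rank_add_of_psd hp0 hp1
  have hle1 : (measSub (Bᴴ * B) 1).rank ≤ (ptraceFst (Bᴴ * B)).rank := by
    rw [ptraceFst_eq_add, add_comm]
    exact rank_le_rank_add_of_psd hp1 hp0
  have := Matrix.rank_conjTranspose_mul_self B
  omega





def iota : Matrix (Fin 2 × D) D ℂ := Matrix.of fun p y => if p = ((0 : Fin 2), y) then 1 else 0

lemma corner_eq (X : Matrix (Fin 2 × D) (Fin 2 × D) ℂ) :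
    ((iota (D := D))ᴴ * X * iota (D := D) : Matrix D D ℂ) = Matrix.of fun y y' => X (0, y) (0, y') := by
  ext y y'
  simp [Matrix.mul_apply, conjTranspose_apply, iota, apply_ite, mul_ite, ite_mul,
    Finset.sum_ite_eq', Finset.sum_ite_eq]

lemma rank_le_rank_kron (ρ : Matrix D D ℂ) :
    ρ.rank ≤ ((Matrix.single (0 : Fin 2) (0 : Fin 2) (1:ℂ)) ⊗ₖ ρ).rank := by
  set X := (Matrix.single (0 : Fin 2) (0 : Fin 2) (1:ℂ)) ⊗ₖ ρ with hX
  have h : ((iota (D := D))ᴴ * X * iota (D := D) : Matrix D D ℂ) = ρ := by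
    rw [corner_eq]
    ext y y'
    simp [hX, Matrix.kroneckerMap_apply, Matrix.single]
  calc ρ.rank = ((iota (D := D))ᴴ * X * iota (D := D) : Matrix D D ℂ).rank := by rw [h]
    _ ≤ ((iota (D := D))ᴴ * X : Matrix D (Fin 2 × D) ℂ).rank := Matrix.rank_mul_le_left _ _
    _ ≤ _ := Matrix.rank_mul_le_right _ _

lemma kron_conjTranspose (A : Matrix (Fin 2) (Fin 2) ℂ) (B : Matrix D D ℂ) :
    (A ⊗ₖ B)ᴴ = Aᴴ ⊗ₖ Bᴴ := by
  ext p q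
  simp [conjTranspose_apply, Matrix.kroneckerMap_apply, star_mul']

lemma kron_posSemidef {A : Matrix (Fin 2) (Fin 2) ℂ} {B : Matrix D D ℂ}
    (hA : A.PosSemidef) (hB : B.PosSemidef) : (A ⊗ₖ B).PosSemidef := by
  obtain ⟨A', rfl⟩ := Matrix.posSemidef_iff_eq_transpose_mul_self.mp hA
  obtain ⟨B', rfl⟩ := Matrix.posSemidef_iff_eq_transpose_mul_self.mp hB
  rw [Matrix.mul_kronecker_mul, ← kron_conjTranspose]
  exact Matrix.posSemidef_conjTranspose_mul_self _

lemma stdBasis_posSemidef : (Matrix.single (0 : Fin 2) (0 : Fin 2) (1:ℂ)).PosSemidef := by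
  have h : Matrix.single (0 : Fin 2) (0 : Fin 2) (1:ℂ)
      = (Matrix.single (0 : Fin 2) (0 : Fin 2) (1:ℂ))ᴴ
        * Matrix.single (0 : Fin 2) (0 : Fin 2) (1:ℂ) := by
    ext a b
    by_cases ha : a = 0 <;> by_cases hb : b = 0 <;>
      simp [Matrix.mul_apply, conjTranspose_apply, Matrix.single, ha, hb, eq_comm,
        Fin.sum_univ_two]
  rw [h]; exact Matrix.posSemidef_conjTranspose_mul_self _

lemma rank_conj_unitary_ge {P : Type*} [Fintype P] [DecidableEq P]
    {U : Matrix P P ℂ} (hU : U ∈ Matrix.unitaryGroup P ℂ) (A : Matrix P P ℂ) :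
    A.rank ≤ (U * A * Uᴴ).rank := by
  have h1 : Uᴴ * U = 1 := by
    have := hU.1
    rwa [Matrix.star_eq_conjTranspose] at this
  have h : A = Uᴴ * (U * A * Uᴴ) * U := by
    calc A = (Uᴴ * U) * A * (Uᴴ * U) := by rw [h1, Matrix.one_mul, Matrix.mul_one]
      _ = Uᴴ * (U * A * Uᴴ) * U := by noncomm_ring
  calc A.rank = (Uᴴ * (U * A * Uᴴ) * U).rank := by rw [← h]
    _ ≤ (Uᴴ * (U * A * Uᴴ)).rank := Matrix.rank_mul_le_left _ _
    _ ≤ _ := Matrix.rank_mul_le_right _ _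

lemma init_posSemidef (n : ℕ) :
    (((2:ℂ)^n)⁻¹ • (1 : Matrix (Fin (2^n)) (Fin (2^n)) ℂ)).PosSemidef := by
  have hc : (0:ℂ) ≤ ((2:ℂ)^n)⁻¹ := by
    rw [show ((2:ℂ)^n)⁻¹ = ((((2:ℝ)^n)⁻¹ : ℝ) : ℂ) by push_cast; ring]
    rw [Complex.zero_le_real]
    positivity
  have hcr : (starRingEnd ℂ) ((2:ℂ)^n)⁻¹ = ((2:ℂ)^n)⁻¹ := by
    rw [show ((2:ℂ)^n)⁻¹ = ((((2:ℝ)^n)⁻¹ : ℝ) : ℂ) by push_cast; ring, Complex.conj_ofReal]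
  refine Matrix.PosSemidef.of_dotProduct_mulVec_nonneg ?_ ?_
  · unfold Matrix.IsHermitian
    rw [Matrix.conjTranspose_smul, Matrix.conjTranspose_one]
    rw [show star ((2:ℂ)^n)⁻¹ = ((2:ℂ)^n)⁻¹ from hcr]
  · intro x
    rw [Matrix.smul_mulVec, Matrix.one_mulVec, dotProduct_smul, smul_eq_mul]
    exact mul_nonneg hc (dotProduct_star_self_nonneg x)

lemma init_rank (n : ℕ) : (((2:ℂ)^n)⁻¹ • (1 : Matrix (Fin (2^n)) (Fin (2^n)) ℂ)).rank = 2^n := by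
  have h2 : ((2:ℂ)^n) ≠ 0 := pow_ne_zero _ two_ne_zero
  have hu : IsUnit (((2:ℂ)^n)⁻¹ • (1 : Matrix (Fin (2^n)) (Fin (2^n)) ℂ)) := by
    refine ⟨⟨_, ((2:ℂ)^n) • 1, ?_, ?_⟩, rfl⟩ <;>
      simp [Matrix.smul_mul, Matrix.mul_smul, smul_smul, inv_mul_cancel₀ h2, mul_inv_cancel₀ h2]
  rw [Matrix.rank_of_isUnit _ hu, Fintype.card_fin]

lemma pure_rank_le {σ : Matrix D D ℂ} (ψ : D → ℂ) (h : σ = Matrix.vecMulVec ψ (star ψ)) :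
    σ.rank ≤ 1 := by
  rw [h, Matrix.vecMulVec_eq (Fin 1)]
  calc (Matrix.replicateCol (Fin 1) ψ * Matrix.replicateRow (Fin 1) (star ψ)).rank
      ≤ (Matrix.replicateCol (Fin 1) ψ).rank := Matrix.rank_mul_le_left _ _
    _ ≤ Fintype.card (Fin 1) := Matrix.rank_le_card_width _
    _ = 1 := by simp


lemma key_bound (n : ℕ) (U : ℕ → Matrix (Fin 2 × Fin (2^n)) (Fin 2 × Fin (2^n)) ℂ)
    (hU : ∀ i, U i ∈ Matrix.unitaryGroup (Fin 2 × Fin (2^n)) ℂ) :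
    ∀ k, (iterState n U k).PosSemidef ∧ 2^n ≤ 2^k * (iterState n U k).rank := by
  intro k
  induction k with
  | zero =>
    refine ⟨init_posSemidef n, ?_⟩
    rw [show iterState n U 0 = ((2:ℂ)^n)⁻¹ • 1 from rfl, init_rank n]
    simp
  | succ k ih =>
    obtain ⟨hpsd, hrk⟩ := ih
    set ρ := iterState n U k with hρ
    set σ' := U k * ((Matrix.single 0 0 1) ⊗ₖ ρ) * (U k)ᴴ with hσ'def
    have hσ'psd : σ'.PosSemidef :=
      (kron_posSemidef stdBasis_posSemidef hpsd).mul_mul_conjTranspose_same (U k)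
    have hnext : iterState n U (k+1) = ptraceFst σ' := rfl
    refine ⟨?_, ?_⟩
    · rw [hnext, ptraceFst_eq_add]
      exact (measSub_posSemidef hσ'psd 0).add (measSub_posSemidef hσ'psd 1)
    · have h1 : ρ.rank ≤ ((Matrix.single (0 : Fin 2) (0 : Fin 2) (1:ℂ)) ⊗ₖ ρ).rank :=
        rank_le_rank_kron ρ
      have h2 : ((Matrix.single (0 : Fin 2) (0 : Fin 2) (1:ℂ)) ⊗ₖ ρ).rank ≤ σ'.rank :=
        rank_conj_unitary_ge (hU k) _
      have h3 : σ'.rank ≤ 2 * (ptraceFst σ').rank := rank_le_two_mul_rank_ptraceFst hσ'psd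
      rw [hnext]
      calc 2^n ≤ 2^k * ρ.rank := hrk
        _ ≤ 2^k * (2 * (ptraceFst σ').rank) :=
            Nat.mul_le_mul_left _ (le_trans (le_trans h1 h2) h3)
        _ = 2^(k+1) * (ptraceFst σ').rank := by ring

theorem stmt15 (n k : ℕ)
    (U : ℕ → Matrix (Fin 2 × Fin (2^n)) (Fin 2 × Fin (2^n)) ℂ)
    (hU : ∀ i, U i ∈ Matrix.unitaryGroup (Fin 2 × Fin (2^n)) ℂ)
    (hpure : IsPure (iterState n U k)) : n ≤ k := by
  obtain ⟨_, hbound⟩ := key_bound n U hU k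
  obtain ⟨ψ, _, hσ⟩ := hpure
  have hr : (iterState n U k).rank ≤ 1 := pure_rank_le ψ hσ
  have h2 : (2:ℕ)^n ≤ 2^k := le_trans hbound (by
    calc 2^k * (iterState n U k).rank ≤ 2^k * 1 := Nat.mul_le_mul_left _ hr
      _ = 2^k := by ring)
  exact (Nat.pow_le_pow_iff_right (by norm_num)).mp h2


end
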